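/- Let k ≥ 3 and let c : ZMod k → ℕ be an injective map (a combinatorial cycle visiting k distinct labels). For t ∈ ZMod k write e_t = {c(t), c(t+1)} for the t-th edge of the cycle. Assume that no two of the edges e_s, e_t interleave. Let d : Fin k → ℕ be the strictly increasing enumeration of the image of c. Then the edge set of the cycle is exactly that of the monotone cycle on its support: {e_t : t ∈ ZMod k} = {{d(s), d(s+1)} : 0 ≤ s < k−1} ∪ {{d(0), d(k−1)}}. (This is the fact that a cycle none of whose chords interleave must visit its vertices in increasing order, up to rotation and reflection.) -/

import Mathlib

/-- Two 2-element sets of naturals, written as `{a, b}` with `a < b` and `{a', b'}` with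
`a' < b'`, interleave if `a < a' < b < b'` or `a' < a < b' < b`. -/
def NatInterleave (a b a' b' : ℕ) : Prop :=
  (a < a' ∧ a' < b ∧ b < b') ∨ (a' < a ∧ a < b' ∧ b' < b)

section Aux

variable {k : ℕ} [NeZero k]

private lemma prop_all (P : ZMod k → Prop) (h : ∀ t, P t → P (t + 1))
    {t0 : ZMod k} (h0 : P t0) (t : ZMod k) : P t := by
  have key : ∀ n : ℕ, P (t0 + n) := by
    intro n
    induction n with
    | zero => simpa using h0
    | succ m ih =>
      have h2 := h _ ih
      have e : ((m + 1 : ℕ) : ZMod k) = (m : ZMod k) + 1 := by push_cast; ring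
      rw [e, ← add_assoc]
      exact h2
  have h2 := key (t - t0).val
  rwa [ZMod.natCast_val, ZMod.cast_id, show t0 + (t - t0) = t by ring] at h2

private lemma prop_all_pred (P : ZMod k → Prop) (h : ∀ t, P t → P (t - 1))
    {t0 : ZMod k} (h0 : P t0) (t : ZMod k) : P t := by
  have h2 := prop_all (fun t => P (-t))
    (fun t ht => by
      have := h (-t) ht
      simpa [neg_add, sub_eq_add_neg, add_comm] using this)
    (t0 := -t0) (by simpa using h0) (-t)
  simpa using h2

private lemma walk_fwd (c : ZMod k → ℕ) (Q : ZMod k → Prop) (w : ℕ)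
    (hstep : ∀ t, Q t → Q (t + 1) ∨ c (t + 1) = w)
    {t0 : ZMod k} (h0 : Q t0) {t1 : ZMod k} (h1 : ¬ Q t1) :
    ∃ t, Q t ∧ c (t + 1) = w := by
  by_contra h
  push_neg at h
  exact h1 (prop_all Q (fun t ht => (hstep t ht).resolve_right (h t ht)) h0 t1)

private lemma walk_bwd (c : ZMod k → ℕ) (Q : ZMod k → Prop) (w : ℕ)
    (hstep : ∀ t, Q t → Q (t - 1) ∨ c (t - 1) = w)
    {t0 : ZMod k} (h0 : Q t0) {t1 : ZMod k} (h1 : ¬ Q t1) :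
    ∃ t, Q t ∧ c (t - 1) = w := by
  by_contra h
  push_neg at h
  exact h1 (prop_all_pred Q (fun t ht => (hstep t ht).resolve_right (h t ht)) h0 t1)

private lemma both_neighbors (c : ZMod k → ℕ) (hc : Function.Injective c)
    (Q : ZMod k → Prop) (w : ℕ)
    (hstep : ∀ t, Q t → Q (t + 1) ∨ c (t + 1) = w)
    (hstep' : ∀ t, Q t → Q (t - 1) ∨ c (t - 1) = w)
    {t0 : ZMod k} (h0 : Q t0) {tw0 : ZMod k} (hw0 : c tw0 = w)
    (hnw : ∀ t, Q t → c t ≠ w) :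
    ∃ tw, c tw = w ∧ Q (tw - 1) ∧ Q (tw + 1) := by
  obtain ⟨tf, hQf, hf⟩ := walk_fwd c Q w hstep h0 (fun h => hnw _ h hw0)
  obtain ⟨tb, hQb, hb⟩ := walk_bwd c Q w hstep' h0 (fun h => hnw _ h hw0)
  have he : tf + 1 = tb - 1 := hc (hf.trans hb.symm)
  refine ⟨tf + 1, hf, ?_, ?_⟩
  · simpa using hQf
  · rw [he]
    simpa using hQb

private lemma pair_minmax (u v : ℕ) : ({u, v} : Finset ℕ) = {min u v, max u v} := by
  rcases le_total u v with h | h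
  · rw [min_eq_left h, max_eq_right h]
  · rw [min_eq_right h, max_eq_left h, Finset.pair_comm]

private lemma pair_inj {a b a' b' : ℕ} (h1 : a < b) (h2 : a' < b')
    (h : ({a, b} : Finset ℕ) = {a', b'}) : a = a' ∧ b = b' := by
  have ha : a ∈ ({a', b'} : Finset ℕ) := h ▸ Finset.mem_insert_self a {b}
  have hb : b ∈ ({a', b'} : Finset ℕ) := h ▸ Finset.mem_insert_of_mem (Finset.mem_singleton_self b)
  have ha' : a' ∈ ({a, b} : Finset ℕ) := h ▸ Finset.mem_insert_self a' {b'}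
  simp only [Finset.mem_insert, Finset.mem_singleton] at ha hb ha'
  omega

/-- The key lemma: if `x < y` are values of `c` with no value of `c` strictly between
them, then `{x, y}` is an edge of the cycle. -/
private lemma key_edge (c : ZMod k → ℕ) (hc : Function.Injective c)
    (hk1 : (1 : ZMod k) ≠ 0)
    (hnointer : ∀ s t : ZMod k, ∀ a b a' b' : ℕ, a < b → a' < b' →
      ({c s, c (s + 1)} : Finset ℕ) = {a, b} →
      ({c t, c (t + 1)} : Finset ℕ) = {a', b'} →
      ¬ NatInterleave a b a' b')
    (x y : ℕ) (hx : x ∈ Set.range c) (hy : y ∈ Set.range c) (hxy : x < y)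
    (hgap : ∀ t, c t ≤ x ∨ y ≤ c t)
    (B : ℕ) (hB : ∀ t, c t ≤ B) :
    ∃ t : ZMod k, ({c t, c (t + 1)} : Finset ℕ) = {x, y} := by
  classical
  have hne : ∀ t : ZMod k, c t ≠ c (t + 1) := fun t h =>
    hk1 (left_eq_add.mp (hc h))
  have hmm : ∀ t : ZMod k, min (c t) (c (t + 1)) < max (c t) (c (t + 1)) := fun t =>
    min_lt_max.mpr (hne t)
  have hNI : ∀ t t' : ZMod k,
      ¬ NatInterleave (min (c t) (c (t + 1))) (max (c t) (c (t + 1)))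
        (min (c t') (c (t' + 1))) (max (c t') (c (t' + 1))) := fun t t' =>
    hnointer t t' _ _ _ _ (hmm t) (hmm t') (pair_minmax _ _) (pair_minmax _ _)
  obtain ⟨tx, htx⟩ := hx
  obtain ⟨ty, hty⟩ := hy
  set Sp : ZMod k → Prop :=
    fun t => (c t ≤ x ∧ y ≤ c (t + 1)) ∨ (c (t + 1) ≤ x ∧ y ≤ c t) with hSpdef
  -- there exists a spanning edge
  have hSpEx : ∃ t, Sp t := by
    by_contra h
    push_neg at h
    have hclosed : ∀ t, c t ≤ x → c (t + 1) ≤ x := fun t ht =>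
      (hgap (t + 1)).resolve_right (fun hy' => h t (Or.inl ⟨ht, hy'⟩))
    have := prop_all (fun t => c t ≤ x) hclosed (t0 := tx) (le_of_eq htx) ty
    rw [hty] at this
    omega
  obtain ⟨t1, ht1T, hopt⟩ := Finset.exists_max_image (Finset.univ.filter Sp)
    (fun t => min (c t) (c (t + 1)) * (B + 1) + (B - max (c t) (c (t + 1))))
    (by obtain ⟨t, ht⟩ := hSpEx; exact ⟨t, by simpa using ht⟩)
  have hSp1 : Sp t1 := by simpa using ht1T
  set a := min (c t1) (c (t1 + 1)) with hadef
  set b := max (c t1) (c (t1 + 1)) with hbdef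
  have hab : a < b := hmm t1
  have hax : a ≤ x := by
    rcases hSp1 with ⟨h1, h2⟩ | ⟨h1, h2⟩
    · exact le_trans (min_le_left _ _) h1
    · exact le_trans (min_le_right _ _) h1
  have hyb : y ≤ b := by
    rcases hSp1 with ⟨h1, h2⟩ | ⟨h1, h2⟩
    · exact le_trans h2 (le_max_right _ _)
    · exact le_trans h2 (le_max_left _ _)
  have hbB : b ≤ B := max_le (hB t1) (hB (t1 + 1))
  -- lexicographic optimality
  have hopt2 : ∀ t, Sp t → min (c t) (c (t + 1)) ≤ a ∧
      (a ≤ min (c t) (c (t + 1)) → b ≤ max (c t) (c (t + 1))) := by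
    intro t ht
    have hk2 := hopt t (by simpa using ht)
    set u := min (c t) (c (t + 1)) with hu
    set v := max (c t) (c (t + 1)) with hv
    have hvB : v ≤ B := max_le (hB t) (hB (t + 1))
    constructor
    · by_contra hlt
      push_neg at hlt
      have h3 : (a + 1) * (B + 1) ≤ u * (B + 1) := Nat.mul_le_mul_right _ hlt
      have h4 : (a + 1) * (B + 1) = a * (B + 1) + (B + 1) := by ring
      set p := a * (B + 1)
      set q := u * (B + 1)
      omega
    · intro hge
      have heq : u = a := by
        by_contra hne'
        have hlt : a < u := lt_of_le_of_ne hge (Ne.symm hne')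
        have h3 : (a + 1) * (B + 1) ≤ u * (B + 1) := Nat.mul_le_mul_right _ hlt
        have h4 : (a + 1) * (B + 1) = a * (B + 1) + (B + 1) := by ring
        set p := a * (B + 1)
        set q := u * (B + 1)
        omega
      rw [heq] at hk2
      set p := a * (B + 1)
      omega
  -- interleaving helper: an edge with one endpoint strictly inside (a,b) and the other
  -- outside [a,b] is impossible
  have hinter : ∀ t : ZMod k, ∀ u v : ℕ, ((u = c t ∧ v = c (t + 1)) ∨ (v = c t ∧ u = c (t + 1))) →
      a < u → u < b → (v < a ∨ b < v) → False := by
    intro t u v huv hau hub hv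
    have hNIt := hNI t1 t
    rw [← hadef, ← hbdef] at hNIt
    rcases hv with hv | hv
    · have hmin : min (c t) (c (t + 1)) = v := by
        rcases huv with ⟨h1, h2⟩ | ⟨h1, h2⟩
        · rw [← h1, ← h2]; exact min_eq_right (by omega)
        · rw [← h1, ← h2]; exact min_eq_left (by omega)
      have hmax : max (c t) (c (t + 1)) = u := by
        rcases huv with ⟨h1, h2⟩ | ⟨h1, h2⟩
        · rw [← h1, ← h2]; exact max_eq_left (by omega)
        · rw [← h1, ← h2]; exact max_eq_right (by omega)
      rw [hmin, hmax] at hNIt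
      exact hNIt (Or.inr ⟨hv, hau, hub⟩)
    · have hmin : min (c t) (c (t + 1)) = u := by
        rcases huv with ⟨h1, h2⟩ | ⟨h1, h2⟩
        · rw [← h1, ← h2]; exact min_eq_left (by omega)
        · rw [← h1, ← h2]; exact min_eq_right (by omega)
      have hmax : max (c t) (c (t + 1)) = v := by
        rcases huv with ⟨h1, h2⟩ | ⟨h1, h2⟩
        · rw [← h1, ← h2]; exact max_eq_right (by omega)
        · rw [← h1, ← h2]; exact max_eq_left (by omega)
      rw [hmin, hmax] at hNIt
      exact hNIt (Or.inl ⟨hau, hub, hv⟩)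
  have haR : a ∈ Set.range c := by
    rcases min_choice (c t1) (c (t1 + 1)) with h | h
    · exact ⟨t1, (hadef.trans h).symm⟩
    · exact ⟨t1 + 1, (hadef.trans h).symm⟩
  have hbR : b ∈ Set.range c := by
    rcases max_choice (c t1) (c (t1 + 1)) with h | h
    · exact ⟨t1, (hbdef.trans h).symm⟩
    · exact ⟨t1 + 1, (hbdef.trans h).symm⟩
  -- Step 1: a = x
  have haxeq : a = x := by
    rcases eq_or_lt_of_le hax with h | hlt
    · exact h
    exfalso
    set Q : ZMod k → Prop := fun t => a < c t ∧ c t ≤ x with hQdef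
    have hstep : ∀ t, Q t → Q (t + 1) ∨ c (t + 1) = a := by
      intro t ⟨h1, h2⟩
      rcases lt_trichotomy (c (t + 1)) a with h3 | h3 | h3
      · exact absurd (hinter t (c t) (c (t + 1)) (Or.inl ⟨rfl, rfl⟩) h1
          (lt_of_le_of_lt h2 (lt_of_lt_of_le hxy hyb)) (Or.inl h3)) id
      · exact Or.inr h3
      · rcases hgap (t + 1) with h4 | h4
        · exact Or.inl ⟨h3, h4⟩
        · exfalso
          have hSpt : Sp t := Or.inl ⟨h2, h4⟩
          have := (hopt2 t hSpt).1
          have : min (c t) (c (t + 1)) = c t := min_eq_left (by omega)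
          have := (hopt2 t hSpt).1
          omega
    have hstep' : ∀ t, Q t → Q (t - 1) ∨ c (t - 1) = a := by
      intro t ⟨h1, h2⟩
      have hts : (t - 1) + 1 = t := by ring
      rcases lt_trichotomy (c (t - 1)) a with h3 | h3 | h3
      · refine absurd (hinter (t - 1) (c t) (c (t - 1)) ?_ h1
          (lt_of_le_of_lt h2 (lt_of_lt_of_le hxy hyb)) (Or.inl h3)) id
        rw [hts]
        exact Or.inr ⟨rfl, rfl⟩
      · exact Or.inr h3
      · rcases hgap (t - 1) with h4 | h4
        · exact Or.inl ⟨h3, h4⟩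
        · exfalso
          have hSpt : Sp (t - 1) := by
            rw [hSpdef]
            simp only [hts]
            exact Or.inr ⟨h2, h4⟩
          have h5 := (hopt2 (t - 1) hSpt).1
          rw [hts] at h5
          have : min (c (t - 1)) (c t) = c t := min_eq_right (by omega)
          omega
    obtain ⟨taw, htaw⟩ := haR
    obtain ⟨tw, hcw, hQm, hQp⟩ := both_neighbors c hc Q a hstep hstep'
      (t0 := tx) (by rw [hQdef]; exact ⟨by omega, by omega⟩) (tw0 := taw) htaw
      (fun t ht => by rw [hQdef] at ht; omega)
    -- the edge {a, b} is incident to the vertex of value a, but both cycle-neighbors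
    -- of that vertex have values ≤ x < b
    rcases le_total (c t1) (c (t1 + 1)) with h | h
    · have h1 : c t1 = a := (min_eq_left h).symm ▸ rfl
      have h2 : c (t1 + 1) = b := (max_eq_right h).symm ▸ rfl
      have : t1 = tw := hc (h1.trans hcw.symm)
      rw [this] at h2
      have := hQp.2
      rw [h2] at this
      omega
    · have h1 : c (t1 + 1) = a := (min_eq_right h).symm ▸ rfl
      have h2 : c t1 = b := (max_eq_left h).symm ▸ rfl
      have h3 : t1 + 1 = tw := hc (h1.trans hcw.symm)
      have h4 : t1 = tw - 1 := by rw [← h3]; ring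
      rw [h4] at h2
      have := hQm.2
      rw [h2] at this
      omega
  -- Step 2: b = y
  have hbyeq : b = y := by
    rcases eq_or_lt_of_le hyb with h | hlt
    · exact h.symm
    exfalso
    set Q : ZMod k → Prop := fun t => y ≤ c t ∧ c t < b with hQdef
    have hstep : ∀ t, Q t → Q (t + 1) ∨ c (t + 1) = b := by
      intro t ⟨h1, h2⟩
      have hau : a < c t := by omega
      rcases hgap (t + 1) with h4 | h4
      · -- c (t+1) ≤ x = a
        exfalso
        rcases lt_or_eq_of_le h4 with h5 | h5
        · exact hinter t (c t) (c (t + 1)) (Or.inl ⟨rfl, rfl⟩) hau h2 (Or.inl (by omega))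
        · have hSpt : Sp t := Or.inr ⟨h4, h1⟩
          have h6 := (hopt2 t hSpt).2
          have h7 : min (c t) (c (t + 1)) = c (t + 1) := min_eq_right (by omega)
          have h8 : max (c t) (c (t + 1)) = c t := max_eq_left (by omega)
          rw [h7, h8] at h6
          omega
      · rcases lt_trichotomy (c (t + 1)) b with h3 | h3 | h3
        · exact Or.inl ⟨h4, h3⟩
        · exact Or.inr h3
        · exact absurd (hinter t (c t) (c (t + 1)) (Or.inl ⟨rfl, rfl⟩) hau h2
            (Or.inr h3)) id
    have hstep' : ∀ t, Q t → Q (t - 1) ∨ c (t - 1) = b := by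
      intro t ⟨h1, h2⟩
      have hau : a < c t := by omega
      have hts : (t - 1) + 1 = t := by ring
      rcases hgap (t - 1) with h4 | h4
      · exfalso
        rcases lt_or_eq_of_le h4 with h5 | h5
        · refine hinter (t - 1) (c t) (c (t - 1)) ?_ hau h2 (Or.inl (by omega))
          rw [hts]
          exact Or.inr ⟨rfl, rfl⟩
        · have hSpt : Sp (t - 1) := by
            rw [hSpdef]
            simp only [hts]
            exact Or.inl ⟨h4, h1⟩
          have h6 := (hopt2 (t - 1) hSpt).2
          rw [hts] at h6
          have h7 : min (c (t - 1)) (c t) = c (t - 1) := min_eq_left (by omega)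
          have h8 : max (c (t - 1)) (c t) = c t := max_eq_right (by omega)
          rw [h7, h8] at h6
          omega
      · rcases lt_trichotomy (c (t - 1)) b with h3 | h3 | h3
        · exact Or.inl ⟨h4, h3⟩
        · exact Or.inr h3
        · refine absurd (hinter (t - 1) (c t) (c (t - 1)) ?_ hau h2 (Or.inr h3)) id
          rw [hts]
          exact Or.inr ⟨rfl, rfl⟩
    obtain ⟨tbw, htbw⟩ := hbR
    obtain ⟨tw, hcw, hQm, hQp⟩ := both_neighbors c hc Q b hstep hstep'
      (t0 := ty) (by rw [hQdef]; exact ⟨by omega, by omega⟩) (tw0 := tbw) htbw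
      (fun t ht => by rw [hQdef] at ht; omega)
    rcases le_total (c t1) (c (t1 + 1)) with h | h
    · have h1 : c t1 = a := (min_eq_left h).symm ▸ rfl
      have h2 : c (t1 + 1) = b := (max_eq_right h).symm ▸ rfl
      have h3 : t1 + 1 = tw := hc (h2.trans hcw.symm)
      have h4 : t1 = tw - 1 := by rw [← h3]; ring
      rw [h4] at h1
      have := hQm.1
      rw [h1] at this
      omega
    · have h1 : c (t1 + 1) = a := (min_eq_right h).symm ▸ rfl
      have h2 : c t1 = b := (max_eq_left h).symm ▸ rfl
      have h3 : t1 = tw := hc (h2.trans hcw.symm)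
      rw [h3] at h1
      have := hQp.1
      rw [h1] at this
      omega
  refine ⟨t1, ?_⟩
  rw [pair_minmax (c t1) (c (t1 + 1)), ← hadef, ← hbdef, haxeq, hbyeq]

/-- The closing edge: `{min, max}` is an edge of the cycle. -/
private lemma key_edge_closing (c : ZMod k → ℕ) (hc : Function.Injective c)
    (hk1 : (1 : ZMod k) ≠ 0)
    (hnointer : ∀ s t : ZMod k, ∀ a b a' b' : ℕ, a < b → a' < b' →
      ({c s, c (s + 1)} : Finset ℕ) = {a, b} →
      ({c t, c (t + 1)} : Finset ℕ) = {a', b'} →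
      ¬ NatInterleave a b a' b')
    (x y M : ℕ) (hx : x ∈ Set.range c) (hy : y ∈ Set.range c) (hM : M ∈ Set.range c)
    (hxy : x < y)
    (hgap : ∀ t, c t ≤ x ∨ y ≤ c t)
    (hmin : ∀ t, x ≤ c t) (hmax : ∀ t, c t ≤ M) :
    ∃ t : ZMod k, ({c t, c (t + 1)} : Finset ℕ) = {x, M} := by
  classical
  have hne : ∀ t : ZMod k, c t ≠ c (t + 1) := fun t h =>
    hk1 (left_eq_add.mp (hc h))
  have hmm : ∀ t : ZMod k, min (c t) (c (t + 1)) < max (c t) (c (t + 1)) := fun t =>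
    min_lt_max.mpr (hne t)
  have hNI : ∀ t t' : ZMod k,
      ¬ NatInterleave (min (c t) (c (t + 1))) (max (c t) (c (t + 1)))
        (min (c t') (c (t' + 1))) (max (c t') (c (t' + 1))) := fun t t' =>
    hnointer t t' _ _ _ _ (hmm t) (hmm t') (pair_minmax _ _) (pair_minmax _ _)
  obtain ⟨tx, htx⟩ := hx
  obtain ⟨ty, hty⟩ := hy
  obtain ⟨tM, htM⟩ := hM
  set Sp : ZMod k → Prop :=
    fun t => (c t ≤ x ∧ y ≤ c (t + 1)) ∨ (c (t + 1) ≤ x ∧ y ≤ c t) with hSpdef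
  have hSpEx : ∃ t, Sp t := by
    by_contra h
    push_neg at h
    have hclosed : ∀ t, c t ≤ x → c (t + 1) ≤ x := fun t ht =>
      (hgap (t + 1)).resolve_right (fun hy' => h t (Or.inl ⟨ht, hy'⟩))
    have := prop_all (fun t => c t ≤ x) hclosed (t0 := tx) (le_of_eq htx) ty
    rw [hty] at this
    omega
  obtain ⟨t1, ht1T, hopt⟩ := Finset.exists_max_image (Finset.univ.filter Sp)
    (fun t => max (c t) (c (t + 1)))
    (by obtain ⟨t, ht⟩ := hSpEx; exact ⟨t, by simpa using ht⟩)
  have hSp1 : Sp t1 := by simpa using ht1T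
  set a := min (c t1) (c (t1 + 1)) with hadef
  set b := max (c t1) (c (t1 + 1)) with hbdef
  have hab : a < b := hmm t1
  have haxeq : a = x := by
    have h1 : x ≤ a := le_min (hmin t1) (hmin (t1 + 1))
    have h2 : a ≤ x := by
      rcases hSp1 with ⟨h1, h2⟩ | ⟨h1, h2⟩
      · exact le_trans (min_le_left _ _) h1
      · exact le_trans (min_le_right _ _) h1
    omega
  have hyb : y ≤ b := by
    rcases hSp1 with ⟨h1, h2⟩ | ⟨h1, h2⟩
    · exact le_trans h2 (le_max_right _ _)
    · exact le_trans h2 (le_max_left _ _)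
  have hbM : b ≤ M := max_le (hmax t1) (hmax (t1 + 1))
  have hopt2 : ∀ t, Sp t → max (c t) (c (t + 1)) ≤ b := fun t ht =>
    hopt t (by simpa using ht)
  have hinter : ∀ t : ZMod k, ∀ u v : ℕ, ((u = c t ∧ v = c (t + 1)) ∨ (v = c t ∧ u = c (t + 1))) →
      a < u → u < b → (v < a ∨ b < v) → False := by
    intro t u v huv hau hub hv
    have hNIt := hNI t1 t
    rw [← hadef, ← hbdef] at hNIt
    rcases hv with hv | hv
    · have hmin' : min (c t) (c (t + 1)) = v := by
        rcases huv with ⟨h1, h2⟩ | ⟨h1, h2⟩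
        · rw [← h1, ← h2]; exact min_eq_right (by omega)
        · rw [← h1, ← h2]; exact min_eq_left (by omega)
      have hmax' : max (c t) (c (t + 1)) = u := by
        rcases huv with ⟨h1, h2⟩ | ⟨h1, h2⟩
        · rw [← h1, ← h2]; exact max_eq_left (by omega)
        · rw [← h1, ← h2]; exact max_eq_right (by omega)
      rw [hmin', hmax'] at hNIt
      exact hNIt (Or.inr ⟨hv, hau, hub⟩)
    · have hmin' : min (c t) (c (t + 1)) = u := by
        rcases huv with ⟨h1, h2⟩ | ⟨h1, h2⟩
        · rw [← h1, ← h2]; exact min_eq_left (by omega)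
        · rw [← h1, ← h2]; exact min_eq_right (by omega)
      have hmax' : max (c t) (c (t + 1)) = v := by
        rcases huv with ⟨h1, h2⟩ | ⟨h1, h2⟩
        · rw [← h1, ← h2]; exact max_eq_right (by omega)
        · rw [← h1, ← h2]; exact max_eq_left (by omega)
      rw [hmin', hmax'] at hNIt
      exact hNIt (Or.inl ⟨hau, hub, hv⟩)
  have hbR : b ∈ Set.range c := by
    rcases max_choice (c t1) (c (t1 + 1)) with h | h
    · exact ⟨t1, (hbdef.trans h).symm⟩
    · exact ⟨t1 + 1, (hbdef.trans h).symm⟩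
  have hbMeq : b = M := by
    rcases eq_or_lt_of_le hbM with h | hlt
    · exact h
    exfalso
    set Q : ZMod k → Prop := fun t => b < c t with hQdef
    have hstep : ∀ t, Q t → Q (t + 1) ∨ c (t + 1) = b := by
      intro t h1
      rcases lt_trichotomy (c (t + 1)) b with h3 | h3 | h3
      · exfalso
        rcases lt_trichotomy (c (t + 1)) a with h5 | h5 | h5
        · have := hmin (t + 1); omega
        · have hSpt : Sp t := Or.inr ⟨by omega, by omega⟩
          have h6 := hopt2 t hSpt
          have h8 : max (c t) (c (t + 1)) = c t := max_eq_left (by omega)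
          rw [h8] at h6
          rw [hQdef] at h1
          omega
        · exact hinter t (c (t + 1)) (c t) (Or.inr ⟨rfl, rfl⟩) h5 h3 (Or.inr h1)
      · exact Or.inr h3
      · exact Or.inl h3
    have hstep' : ∀ t, Q t → Q (t - 1) ∨ c (t - 1) = b := by
      intro t h1
      have hts : (t - 1) + 1 = t := by ring
      rcases lt_trichotomy (c (t - 1)) b with h3 | h3 | h3
      · exfalso
        rcases lt_trichotomy (c (t - 1)) a with h5 | h5 | h5
        · have := hmin (t - 1); omega
        · have hSpt : Sp (t - 1) := by
            rw [hSpdef]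
            simp only [hts]
            exact Or.inl ⟨by omega, by omega⟩
          have h6 := hopt2 (t - 1) hSpt
          rw [hts] at h6
          have h8 : max (c (t - 1)) (c t) = c t := max_eq_right (by omega)
          rw [h8] at h6
          rw [hQdef] at h1
          omega
        · refine hinter (t - 1) (c (t - 1)) (c t) ?_ h5 h3 (Or.inr h1)
          rw [hts]
          exact Or.inl ⟨rfl, rfl⟩
      · exact Or.inr h3
      · exact Or.inl h3
    obtain ⟨tbw, htbw⟩ := hbR
    obtain ⟨tw, hcw, hQm, hQp⟩ := both_neighbors c hc Q b hstep hstep'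
      (t0 := tM) (by rw [hQdef]; omega) (tw0 := tbw) htbw
      (fun t ht => by rw [hQdef] at ht; omega)
    rcases le_total (c t1) (c (t1 + 1)) with h | h
    · have h1 : c t1 = a := (min_eq_left h).symm ▸ rfl
      have h2 : c (t1 + 1) = b := (max_eq_right h).symm ▸ rfl
      have h3 : t1 + 1 = tw := hc (h2.trans hcw.symm)
      have h4 : t1 = tw - 1 := by rw [← h3]; ring
      rw [h4] at h1
      have := hQm
      rw [hQdef] at this
      rw [h1] at this
      omega
    · have h1 : c (t1 + 1) = a := (min_eq_right h).symm ▸ rfl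
      have h2 : c t1 = b := (max_eq_left h).symm ▸ rfl
      have h3 : t1 = tw := hc (h2.trans hcw.symm)
      rw [h3] at h1
      have := hQp
      rw [hQdef] at this
      rw [h1] at this
      omega
  refine ⟨t1, ?_⟩
  rw [pair_minmax (c t1) (c (t1 + 1)), ← hadef, ← hbdef, haxeq, hbMeq]

end Aux

/-- A combinatorial cycle `c : ZMod k → ℕ` (k ≥ 3, `c` injective) whose edges
`e_t = {c t, c (t+1)}` pairwise do not interleave must visit its vertex set in
increasing order, up to rotation and reflection: if `d : Fin k → ℕ` is the strictly
increasing enumeration of the image of `c`, then the edge set of the cycle equals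
`{{d s, d (s+1)} : 0 ≤ s < k-1} ∪ {{d 0, d (k-1)}}`. -/
theorem noninterleaving_cycle_is_monotone (k : ℕ) (hk : 3 ≤ k)
    (c : ZMod k → ℕ) (hc : Function.Injective c)
    (hnointer : ∀ s t : ZMod k, ∀ a b a' b' : ℕ, a < b → a' < b' →
      ({c s, c (s + 1)} : Finset ℕ) = {a, b} →
      ({c t, c (t + 1)} : Finset ℕ) = {a', b'} →
      ¬ NatInterleave a b a' b')
    (d : Fin k → ℕ) (hd : StrictMono d) (hrange : Set.range d = Set.range c) :
    {e : Finset ℕ | ∃ t : ZMod k, e = {c t, c (t + 1)}} =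
      {e : Finset ℕ | ∃ s : ℕ, ∃ h : s + 1 ≤ k - 1,
          e = {d ⟨s, by omega⟩, d ⟨s + 1, by omega⟩}} ∪
        {({d ⟨0, by omega⟩, d ⟨k - 1, by omega⟩} : Finset ℕ)} := by
  classical
  haveI : NeZero k := ⟨by omega⟩
  haveI : Fact (1 < k) := ⟨by omega⟩
  have hk1 : (1 : ZMod k) ≠ 0 := one_ne_zero
  have hdc : ∀ j : Fin k, d j ∈ Set.range c := fun j => hrange ▸ Set.mem_range_self j
  have hcd : ∀ t : ZMod k, ∃ j : Fin k, d j = c t := fun t =>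
    (hrange ▸ Set.mem_range_self t : c t ∈ Set.range d)
  have hmax : ∀ t, c t ≤ d ⟨k - 1, by omega⟩ := by
    intro t
    obtain ⟨j, hj⟩ := hcd t
    rw [← hj]
    exact hd.monotone (by simp [Fin.le_def]; omega)
  have hmin : ∀ t, d ⟨0, by omega⟩ ≤ c t := by
    intro t
    obtain ⟨j, hj⟩ := hcd t
    rw [← hj]
    exact hd.monotone (by simp [Fin.le_def])
  have hgap : ∀ s : ℕ, (hs : s + 1 < k) → ∀ t,
      c t ≤ d ⟨s, by omega⟩ ∨ d ⟨s + 1, hs⟩ ≤ c t := by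
    intro s hs t
    obtain ⟨j, hj⟩ := hcd t
    rcases le_or_gt j.val s with h | h
    · exact Or.inl (hj ▸ hd.monotone (by simp [Fin.le_def]; omega))
    · exact Or.inr (hj ▸ hd.monotone (by simp [Fin.le_def]; omega))
  -- each consecutive pair is an edge
  have hpath : ∀ s : ℕ, (hs : s + 1 < k) →
      ∃ t : ZMod k, ({c t, c (t + 1)} : Finset ℕ) = {d ⟨s, by omega⟩, d ⟨s + 1, hs⟩} := by
    intro s hs
    exact key_edge c hc hk1 hnointer _ _ (hdc _) (hdc _)
      (hd (by simp [Fin.lt_def])) (hgap s hs) (d ⟨k - 1, by omega⟩) hmax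
  -- the closing edge
  have hclose : ∃ t : ZMod k,
      ({c t, c (t + 1)} : Finset ℕ) = {d ⟨0, by omega⟩, d ⟨k - 1, by omega⟩} := by
    refine key_edge_closing c hc hk1 hnointer (d ⟨0, by omega⟩) (d ⟨1, by omega⟩)
      (d ⟨k - 1, by omega⟩) (hdc _) (hdc _) (hdc _) (hd (by simp [Fin.lt_def]))
      ?_ hmin hmax
    exact hgap 0 (by omega)
  -- now the counting argument
  set E : ZMod k → Finset ℕ := fun t => {c t, c (t + 1)} with hE
  set g : Fin k → Finset ℕ := fun i =>
    if h : i.val + 1 ≤ k - 1 then {d ⟨i.val, by omega⟩, d ⟨i.val + 1, by omega⟩}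
    else {d ⟨0, by omega⟩, d ⟨k - 1, by omega⟩} with hg
  have hL : {e : Finset ℕ | ∃ t : ZMod k, e = {c t, c (t + 1)}} = Set.range E := by
    ext e
    simp [hE, eq_comm]
  have hR : ({e : Finset ℕ | ∃ s : ℕ, ∃ h : s + 1 ≤ k - 1,
          e = {d ⟨s, by omega⟩, d ⟨s + 1, by omega⟩}} ∪
        {({d ⟨0, by omega⟩, d ⟨k - 1, by omega⟩} : Finset ℕ)} : Set (Finset ℕ)) =
      Set.range g := by
    ext e
    constructor
    · rintro (⟨s, h, rfl⟩ | h)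
      · exact ⟨⟨s, by omega⟩, by simp [hg, h, show s < k - 1 by omega]⟩
      · refine ⟨⟨k - 1, by omega⟩, ?_⟩
        simp only [Set.mem_singleton_iff] at h
        rw [h]
        simp only [hg]
        rw [dif_neg (by omega)]
    · rintro ⟨i, rfl⟩
      by_cases h : i.val + 1 ≤ k - 1
      · left
        exact ⟨i.val, h, by simp [hg, h, show i.val < k - 1 by omega]⟩
      · right
        simp only [hg]
        rw [dif_neg h]
        rfl
  have hginj : Function.Injective g := by
    intro i j hij
    simp only [hg] at hij
    by_cases hi : i.val + 1 ≤ k - 1 <;> by_cases hj : j.val + 1 ≤ k - 1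
    · rw [dif_pos hi, dif_pos hj] at hij
      have := pair_inj (hd (by simp [Fin.lt_def])) (hd (by simp [Fin.lt_def])) hij
      have := hd.injective this.1
      have : i.val = j.val := by
        have h2 := congrArg Fin.val this
        simpa using h2
      exact Fin.ext this
    · rw [dif_pos hi, dif_neg hj] at hij
      have := pair_inj (hd (by simp [Fin.lt_def])) (hd (by simp [Fin.lt_def]; omega)) hij
      have h1 := hd.injective this.1
      have h2 := hd.injective this.2
      have h1' : i.val = 0 := by simpa using congrArg Fin.val h1
      have h2' : i.val + 1 = k - 1 := by simpa using congrArg Fin.val h2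
      omega
    · rw [dif_neg hi, dif_pos hj] at hij
      have := pair_inj (hd (by simp [Fin.lt_def]; omega)) (hd (by simp [Fin.lt_def])) hij
      have h1 := hd.injective this.1
      have h2 := hd.injective this.2
      have h1' : (0 : ℕ) = j.val := by simpa using congrArg Fin.val h1
      have h2' : k - 1 = j.val + 1 := by simpa using congrArg Fin.val h2
      omega
    · have : i.val = j.val := by
        have := i.isLt
        have := j.isLt
        omega
      exact Fin.ext this
  have hsub : Set.range g ⊆ Set.range E := by
    rintro e ⟨i, rfl⟩
    by_cases h : i.val + 1 ≤ k - 1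
    · obtain ⟨t, ht⟩ := hpath i.val (by omega)
      refine ⟨t, ?_⟩
      simp only [hE, hg, dif_pos h]
      exact ht
    · obtain ⟨t, ht⟩ := hclose
      refine ⟨t, ?_⟩
      simp only [hE, hg, dif_neg h]
      exact ht
  have hcardE : (Set.range E).ncard ≤ k := by
    have h1 : (Set.range E).ncard ≤ (Set.univ : Set (ZMod k)).ncard := by
      have := Set.ncard_image_le (s := (Set.univ : Set (ZMod k))) (f := E)
        Set.finite_univ
      rwa [Set.image_univ] at this
    rwa [Set.ncard_univ, Nat.card_zmod] at h1
  have hcardg : (Set.range g).ncard = k := by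
    rw [← Nat.card_coe_set_eq, Nat.card_range_of_injective hginj,
      Nat.card_eq_fintype_card, Fintype.card_fin]
  have hEq : Set.range g = Set.range E := by
    apply Set.eq_of_subset_of_ncard_le hsub (by rw [hcardg]; exact hcardE)
      (Set.finite_range E)
  rw [hL]
  rw [hR]
  exact hEq.symm
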